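/- Under the hypotheses above, the number of indices i with zᵢ ≤ t is at least Σᵢ Iᵢ − (2/t)·Σᵢ zᵢᵇ(1−zᵢ)ᵇ. -/

import Mathlib

lemma le_rpow_self_aux {x b : ℝ} (hx0 : 0 ≤ x) (hx1 : x ≤ 1) (hb0 : 0 < b) (hb1 : b ≤ 1) :
    x ≤ x ^ b := by
  rcases eq_or_lt_of_le hx0 with h | h
  · simp [← h, Real.zero_rpow hb0.ne']
  · calc x = x ^ (1:ℝ) := (Real.rpow_one x).symm
      _ ≤ x ^ b := Real.rpow_le_rpow_of_exponent_ge h hx1 hb1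

open Finset in
theorem card_below_threshold (N : ℕ) (hN : 0 < N) (b t : ℝ)
    (hb : b ∈ Set.Ioo (0:ℝ) 1) (ht : t ∈ Set.Ioo (0:ℝ) 1)
    (I z : Fin N → ℝ) (hI : ∀ i, I i ∈ Set.Icc (0:ℝ) 1)
    (hz : ∀ i, z i ∈ Set.Icc (0:ℝ) 1) (hIz : ∀ i, I i ≤ 1 - (z i) ^ 2) :
    (∑ i, I i) - (2 / t) * ∑ i, (z i) ^ b * (1 - z i) ^ b ≤
      ((univ.filter (fun i => z i ≤ t)).card : ℝ) := by
  obtain ⟨hb0, hb1⟩ := hb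
  obtain ⟨ht0, ht1⟩ := ht
  have key : ∀ i, I i ≤ (if z i ≤ t then (1:ℝ) else 0) +
      (2 / t) * ((z i) ^ b * (1 - z i) ^ b) := by
    intro i
    obtain ⟨hz0, hz1⟩ := hz i
    have hf0 : 0 ≤ (z i) ^ b * (1 - z i) ^ b :=
      mul_nonneg (Real.rpow_nonneg hz0 b) (Real.rpow_nonneg (by linarith) b)
    by_cases h : z i ≤ t
    · have := (hI i).2
      simp only [h, if_pos]
      nlinarith [div_pos (by norm_num : (0:ℝ) < 2) ht0]
    · push_neg at h
      simp only [h.not_ge, if_neg, zero_add]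
      have h1 : z i ≤ (z i) ^ b := le_rpow_self_aux hz0 hz1 hb0 hb1.le
      have h2 : 1 - z i ≤ (1 - z i) ^ b := le_rpow_self_aux (by linarith) (by linarith) hb0 hb1.le
      have h3 : t * (1 - z i) ≤ (z i) ^ b * (1 - z i) ^ b := by
        apply mul_le_mul (by linarith) h2 (by linarith)
        exact Real.rpow_nonneg hz0 b
      have h4 : I i ≤ 2 * (1 - z i) := by nlinarith [hIz i, (hI i).1]
      have h5 : 2 * (1 - z i) = (2 / t) * (t * (1 - z i)) := by field_simp
      calc I i ≤ (2 / t) * (t * (1 - z i)) := by rw [← h5]; exact h4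
        _ ≤ (2 / t) * ((z i) ^ b * (1 - z i) ^ b) :=
            mul_le_mul_of_nonneg_left h3 (by positivity)
        _ ≤ (if False then 1 else 0) + (2 / t) * ((z i) ^ b * (1 - z i) ^ b) := by simp
  have hsum := Finset.sum_le_sum (fun i (_ : i ∈ Finset.univ) => key i)
  rw [Finset.sum_add_distrib, Finset.sum_boole, ← Finset.mul_sum] at hsum
  linarith
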